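/- Let X be a metric space, A ⊆ X a subset, K a metric ANR, and f : X → K a continuous map such that the restriction of f to A is nullhomotopic. Then there exists a set U open in X with A ⊆ U such that the restriction of f to U is nullhomotopic. -/

import Mathlib

universe u

/-- A metrizable topological space `K` is a *metric ANR* if for every metrizable space `Z`
and every closed embedding `e : K → Z`, some open neighborhood of the image of `e` in `Z`
retracts onto the image of `e`. -/
def IsMetricANR (K : Type u) [TopologicalSpace K] : Prop :=
  TopologicalSpace.MetrizableSpace K ∧
  ∀ (Z : Type u) [TopologicalSpace Z], TopologicalSpace.MetrizableSpace Z →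
    ∀ e : K → Z, Topology.IsClosedEmbedding e →
      ∃ (U : Set Z), IsOpen U ∧ Set.range e ⊆ U ∧
        ∃ r : C(U, Z), (∀ u : U, r u ∈ Set.range e) ∧
          ∀ (k : K) (h : e k ∈ U), r ⟨e k, h⟩ = e k

open Metric Set Topology Function

section KurWoj

variable {K : Type u} [MetricSpace K]

private lemma abs_min_one_sub_min_one (a b : ℝ) : |min a 1 - min b 1| ≤ |a - b| := by
  have h1 := le_abs_self (a - b)
  have h2 := neg_abs_le (a - b)
  rw [min_def, min_def]
  split_ifs <;> rw [abs_le] <;> constructor <;> linarith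

/-- The Kuratowski–Wojdysławski embedding of a metric space into the bounded continuous
functions on it, using the truncated distance. -/
noncomputable def kEmb (K : Type u) [MetricSpace K] : K → BoundedContinuousFunction K ℝ :=
  fun k => BoundedContinuousFunction.mkOfBound
    ⟨fun x => min (dist k x) 1, (continuous_const.dist continuous_id).min continuous_const⟩ 1
    (by
      intro x y
      have h1 : min (dist k x) 1 ∈ Icc (0:ℝ) 1 :=
        ⟨le_min dist_nonneg zero_le_one, min_le_right _ _⟩
      have h2 : min (dist k y) 1 ∈ Icc (0:ℝ) 1 :=
        ⟨le_min dist_nonneg zero_le_one, min_le_right _ _⟩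
      simp only [ContinuousMap.coe_mk]
      rw [Real.dist_eq, abs_le]
      constructor <;> [linarith [h1.1, h1.2, h2.1, h2.2]; linarith [h1.1, h1.2, h2.1, h2.2]])

lemma kEmb_apply (k x : K) : kEmb K k x = min (dist k x) 1 := rfl

lemma kEmb_dist_le' (k k' : K) : dist (kEmb K k) (kEmb K k') ≤ min (dist k k') 1 := by
  refine (BoundedContinuousFunction.dist_le (le_min dist_nonneg zero_le_one)).2 fun x => ?_
  rw [le_min_iff]
  constructor
  · rw [kEmb_apply, kEmb_apply, Real.dist_eq]
    exact (abs_min_one_sub_min_one _ _).trans (abs_dist_sub_le _ _ _)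
  · rw [kEmb_apply, kEmb_apply, Real.dist_eq, abs_le]
    have h1 : min (dist k x) 1 ∈ Icc (0:ℝ) 1 :=
      ⟨le_min dist_nonneg zero_le_one, min_le_right _ _⟩
    have h2 : min (dist k' x) 1 ∈ Icc (0:ℝ) 1 :=
      ⟨le_min dist_nonneg zero_le_one, min_le_right _ _⟩
    constructor <;> linarith [h1.1, h1.2, h2.1, h2.2]

lemma kEmb_dist_le (k k' : K) : dist (kEmb K k) (kEmb K k') ≤ dist k k' :=
  (kEmb_dist_le' k k').trans (min_le_left _ _)

lemma kEmb_dist_ge (k k' : K) : min (dist k k') 1 ≤ dist (kEmb K k) (kEmb K k') := by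
  have h := BoundedContinuousFunction.dist_coe_le_dist (f := kEmb K k) (g := kEmb K k') k'
  rw [kEmb_apply, kEmb_apply, dist_self] at h
  simpa [Real.dist_eq, abs_of_nonneg (le_min dist_nonneg zero_le_one)] using h

lemma kEmb_isUniformEmbedding : IsUniformEmbedding (kEmb K) := by
  rw [Metric.isUniformEmbedding_iff']
  constructor
  · intro ε hε
    exact ⟨ε, hε, fun h => lt_of_le_of_lt (kEmb_dist_le _ _) h⟩
  · intro δ hδ
    refine ⟨min δ 1, lt_min hδ one_pos, fun {a b} h => ?_⟩
    by_contra hab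
    push_neg at hab
    have h1 : min δ 1 ≤ min (dist a b) 1 := min_le_min hab le_rfl
    have h2 := kEmb_dist_ge a b
    linarith

/-- The image of the Kuratowski–Wojdysławski embedding is closed in its convex hull. -/
lemma kEmb_closure_inter_hull :
    closure (range (kEmb K)) ∩ convexHull ℝ (range (kEmb K)) ⊆ range (kEmb K) := by
  rintro w ⟨hwc, hwh⟩
  have hP : (∀ x, 0 ≤ w x) ∧ ∃ k₀ c, 0 < c ∧ ∀ x, c * min (dist k₀ x) 1 ≤ w x := by
    refine mem_convexHull_iff.1 hwh
      {v | (∀ x, 0 ≤ v x) ∧ ∃ k₀ c, 0 < c ∧ ∀ x, c * min (dist k₀ x) 1 ≤ v x} ?_ ?_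
    · rintro _ ⟨k, rfl⟩
      exact ⟨fun x => le_min dist_nonneg zero_le_one,
        ⟨k, 1, one_pos, fun x => by rw [one_mul, kEmb_apply]⟩⟩
    · rintro v₁ ⟨h₁0, k₁, c₁, hc₁, h₁⟩ v₂ ⟨h₂0, k₂, c₂, hc₂, h₂⟩ a b ha hb hab
      have hval : ∀ x, (a • v₁ + b • v₂) x = a * v₁ x + b * v₂ x := fun x => by
        simp [BoundedContinuousFunction.coe_add, BoundedContinuousFunction.coe_smul]
      constructor
      · intro x
        rw [hval]
        have := h₁0 x; have := h₂0 x
        positivity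
      · rcases eq_or_lt_of_le ha with rfl | ha'
        · have hb1 : b = 1 := by linarith
          refine ⟨k₂, c₂, hc₂, fun x => ?_⟩
          rw [hval, zero_mul, zero_add, hb1, one_mul]
          exact h₂ x
        · refine ⟨k₁, a * c₁, by positivity, fun x => ?_⟩
          rw [hval, mul_assoc]
          have hb2 : 0 ≤ b * v₂ x := by have := h₂0 x; positivity
          have h3 := mul_le_mul_of_nonneg_left (h₁ x) ha'.le
          linarith
  obtain ⟨hw0, k₀, c, hc, hk₀⟩ := hP
  obtain ⟨z, hz, hzw⟩ := mem_closure_iff_seq_limit.1 hwc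
  choose ζ hζ using hz
  have hdz : Filter.Tendsto (fun n => dist (z n) w) Filter.atTop (nhds 0) :=
    tendsto_iff_dist_tendsto_zero.1 hzw
  have hbound : ∀ n, c * min (dist k₀ (ζ n)) 1 ≤ dist (z n) w := by
    intro n
    have h2 := BoundedContinuousFunction.dist_coe_le_dist (f := z n) (g := w) (ζ n)
    have h3 : (z n) (ζ n) = 0 := by
      rw [← hζ n, kEmb_apply, dist_self]
      exact min_eq_left zero_le_one
    rw [h3, Real.dist_eq, abs_sub_comm, sub_zero, abs_of_nonneg (hw0 _)] at h2
    exact (hk₀ (ζ n)).trans h2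
  have hmin0 : Filter.Tendsto (fun n => min (dist k₀ (ζ n)) 1) Filter.atTop (nhds 0) := by
    have hdivc : Filter.Tendsto (fun n => dist (z n) w / c) Filter.atTop (nhds 0) := by
      simpa using hdz.div_const c
    refine squeeze_zero (fun n => le_min dist_nonneg zero_le_one) (fun n => ?_) hdivc
    rw [le_div_iff₀ hc]
    nlinarith [hbound n]
  have hze : Filter.Tendsto z Filter.atTop (nhds (kEmb K k₀)) := by
    rw [tendsto_iff_dist_tendsto_zero]
    refine squeeze_zero (fun n => dist_nonneg) (fun n => ?_) hmin0
    rw [← hζ n]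
    calc dist (kEmb K (ζ n)) (kEmb K k₀) ≤ min (dist (ζ n) k₀) 1 := kEmb_dist_le' _ _
      _ = min (dist k₀ (ζ n)) 1 := by rw [dist_comm]
  exact ⟨k₀, (tendsto_nhds_unique hzw hze).symm⟩

end KurWoj

/-- If `X` is a metric space, `A ⊆ X`, `K` a metric ANR and `f : X → K` a
continuous map whose restriction to `A` is nullhomotopic, then there is an open set `U ⊇ A`
such that the restriction of `f` to `U` is nullhomotopic. -/
theorem nullhomotopic_extends_to_open {X : Type u} [MetricSpace X] (A : Set X)
    {K : Type u} [TopologicalSpace K] (hK : IsMetricANR K)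
    (f : C(X, K)) (hf : (f.restrict A).Nullhomotopic) :
    ∃ U : Set X, IsOpen U ∧ A ⊆ U ∧ (f.restrict U).Nullhomotopic := by
  classical
  obtain ⟨hKmet, hANR⟩ := hK
  haveI := hKmet
  letI : MetricSpace K := TopologicalSpace.metrizableSpaceMetric K
  obtain ⟨y, hy⟩ := hf
  obtain ⟨H⟩ := hy
  haveI : Nonempty K := ⟨y⟩
  set W := BoundedContinuousFunction K ℝ with hW
  set e₀ : K → W := kEmb K with he₀def
  set Zs : Set W := convexHull ℝ (range e₀) with hZs
  set e : K → Zs := fun k => ⟨e₀ k, subset_convexHull ℝ _ (mem_range_self k)⟩ with hedef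
  have he₀c : Continuous e₀ := kEmb_isUniformEmbedding.isEmbedding.continuous
  have hemb : IsEmbedding e :=
    kEmb_isUniformEmbedding.isEmbedding.codRestrict _ _
  have hrange : range e = Subtype.val ⁻¹' (closure (range e₀)) := by
    ext z
    constructor
    · rintro ⟨k, rfl⟩
      exact subset_closure (mem_range_self k)
    · intro hz
      obtain ⟨k, hk⟩ := kEmb_closure_inter_hull ⟨hz, z.2⟩
      exact ⟨k, Subtype.ext hk⟩
  have hce : IsClosedEmbedding e :=
    ⟨hemb, by rw [hrange]; exact isClosed_closure.preimage continuous_subtype_val⟩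
  obtain ⟨V, hVopen, hVr, r, hrmem, hrfix⟩ := hANR Zs inferInstance e hce
  -- the homotopy paths, as a continuous family
  set P : C(↑A, C(unitInterval, K)) :=
    (H.toContinuousMap.comp ⟨Prod.swap, continuous_swap⟩).curry with hPdef
  have hPapp : ∀ (a : ↑A) (t : unitInterval), P a t = H (t, a) := fun a t => rfl
  -- thickening radii
  have hρ : ∀ a : ↑A, ∃ ρ > 0, ∀ (z : Zs) (t : unitInterval),
      dist z (e (H (t, a))) < ρ → z ∈ V := by
    intro a
    have hcomp : IsCompact (range fun t : unitInterval => e (H (t, a))) :=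
      isCompact_range (hce.continuous.comp
        (H.continuous.comp (Continuous.prodMk continuous_id continuous_const)))
    have hsub : (range fun t : unitInterval => e (H (t, a))) ⊆ V := by
      rintro _ ⟨t, rfl⟩
      exact hVr (mem_range_self _)
    obtain ⟨ρ, hρpos, hρsub⟩ := hcomp.exists_thickening_subset_open hVopen hsub
    exact ⟨ρ, hρpos, fun z t hz =>
      hρsub (Metric.mem_thickening_iff.2 ⟨_, mem_range_self t, hz⟩)⟩
  choose ρ hρpos hρV using hρ
  set ε : ↑A → ℝ := fun a => ρ a / 2 with hεdef
  have hεpos : ∀ a, 0 < ε a := fun a => half_pos (hρpos a)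
  -- moduli of continuity
  have hδ : ∀ a : ↑A, ∃ δ > 0,
      (∀ a' : ↑A, dist (a' : X) (a : X) < δ →
        ∀ t, dist (H (t, a')) (H (t, a)) < ε a) ∧
      (∀ x : X, dist x (a : X) < δ → dist (f x) (f (a : X)) < ε a) := by
    intro a
    obtain ⟨δ₁, hδ₁pos, hδ₁⟩ := Metric.continuous_iff.1 P.continuous a (ε a) (hεpos a)
    obtain ⟨δ₂, hδ₂pos, hδ₂⟩ := Metric.continuous_iff.1 f.continuous (a : X) (ε a) (hεpos a)
    refine ⟨min δ₁ δ₂, lt_min hδ₁pos hδ₂pos, fun a' h t => ?_, fun x h => ?_⟩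
    · have h1 : dist a' a < δ₁ := by
        rw [Subtype.dist_eq]; exact lt_of_lt_of_le h (min_le_left _ _)
      have h2 := hδ₁ a' h1
      calc dist (H (t, a')) (H (t, a)) = dist (P a' t) (P a t) := by rw [hPapp, hPapp]
        _ ≤ dist (P a') (P a) := ContinuousMap.dist_apply_le_dist t
        _ < ε a := h2
    · exact hδ₂ x (lt_of_lt_of_le h (min_le_right _ _))
  choose δ hδpos hδH hδf using hδ
  -- the open set
  refine ⟨⋃ a : ↑A, Metric.ball (a : X) (δ a / 10), isOpen_iUnion fun a => isOpen_ball,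
    fun x hx => mem_iUnion.2 ⟨⟨x, hx⟩, mem_ball_self (by have := hδpos ⟨x, hx⟩; linarith)⟩, ?_⟩
  set U : Set X := ⋃ a : ↑A, Metric.ball (a : X) (δ a / 10) with hUdef
  -- partition of unity
  have hcover : (univ : Set ↥U) ⊆
      ⋃ a : ↑A, (Subtype.val ⁻¹' Metric.ball (a : X) (δ a / 10) : Set ↥U) := by
    rintro u -
    have hu : (u : X) ∈ ⋃ a : ↑A, Metric.ball (a : X) (δ a / 10) := u.2
    rw [mem_iUnion] at hu
    obtain ⟨a, ha⟩ := hu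
    exact mem_iUnion.2 ⟨a, ha⟩
  obtain ⟨pou, hpou⟩ := PartitionOfUnity.exists_isSubordinate (ι := ↑A) (X := ↥U)
    isClosed_univ (fun a => Subtype.val ⁻¹' Metric.ball (a : X) (δ a / 10))
    (fun a => isOpen_ball.preimage continuous_subtype_val) hcover
  -- the averaged homotopy, with values in W
  set Q : ↑A → unitInterval → W := fun a t => e₀ (H (t, a)) with hQdef
  have hQcont : ∀ a, Continuous (Q a) := fun a =>
    he₀c.comp (H.continuous.comp (Continuous.prodMk continuous_id continuous_const))
  set Φ : ↥U × unitInterval → W := fun p => ∑ᶠ a, pou a p.1 • Q a p.2 with hΦdef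
  have hΦcont : Continuous Φ := by
    set pou' : PartitionOfUnity ↑A (↥U × unitInterval) univ :=
      { toFun := fun a => (pou a).comp ⟨Prod.fst, continuous_fst⟩
        locallyFinite' := by
          have h1 := pou.locallyFinite.preimage_continuous
            (g := (Prod.fst : ↥U × unitInterval → ↥U)) continuous_fst
          exact h1.subset fun a p hp => hp
        nonneg' := fun a p => pou.nonneg a p.1
        sum_eq_one' := fun p _ => pou.sum_eq_one (mem_univ p.1)
        sum_le_one' := fun p => pou.sum_le_one p.1 } with hpou'
    exact pou'.continuous_finsum_smul (g := fun a p => Q a p.2)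
      (fun a p _ => ((hQcont a).comp continuous_snd).continuousAt)
  -- pointwise description of Φ
  have hΦsum : ∀ (u : ↥U) (t : unitInterval),
      Φ (u, t) = ∑ a ∈ pou.finsupport u, pou a u • Q a t := fun u t =>
    (pou.sum_finsupport_smul_eq_finsum (φ := fun a _ => Q a t)).symm
  have hsupne : ∀ u : ↥U, (pou.finsupport u).Nonempty := by
    intro u
    by_contra h
    rw [Finset.not_nonempty_iff_eq_empty] at h
    have := pou.sum_finsupport (mem_univ u)
    rw [h, Finset.sum_empty] at this
    norm_num at this
  have hballmem : ∀ (u : ↥U) (a : ↑A), a ∈ pou.finsupport u →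
      dist (u : X) (a : X) < δ a / 10 := by
    intro u a ha
    rw [PartitionOfUnity.mem_finsupport] at ha
    have h1 : u ∈ tsupport (pou a) := subset_closure ha
    have h2 := hpou a h1
    rw [mem_preimage, Metric.mem_ball] at h2
    exact h2
  -- the key estimate
  have KEY : ∀ u : ↥U, ∃ a₀ : ↑A, dist (u : X) (a₀ : X) < δ a₀ / 10 ∧
      ∀ t, Φ (u, t) ∈ Zs ∧ dist (Φ (u, t)) (Q a₀ t) ≤ ε a₀ := by
    intro u
    obtain ⟨a₀, ha₀T, ha₀max⟩ := Set.Finite.exists_maximalFor δ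
      (↑(pou.finsupport u)) (pou.finsupport u).finite_toSet
      (by exact_mod_cast hsupne u)
    rw [Finset.mem_coe] at ha₀T
    have hmax : ∀ a ∈ pou.finsupport u, δ a ≤ δ a₀ := by
      intro a ha
      by_contra h
      push_neg at h
      exact absurd (ha₀max (Finset.mem_coe.2 ha) h.le) (not_le.2 h)
    have hdQ : ∀ a ∈ pou.finsupport u, ∀ t, dist (Q a t) (Q a₀ t) < ε a₀ := by
      intro a ha t
      have hd : dist (a : X) (a₀ : X) < δ a₀ := by
        have h1 := hballmem u a ha
        have h2 := hballmem u a₀ ha₀T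
        have h3 := hmax a ha
        have h4 := hδpos a₀
        calc dist (a : X) (a₀ : X) ≤ dist (a : X) (u : X) + dist (u : X) (a₀ : X) :=
              dist_triangle _ _ _
          _ < δ a / 10 + δ a₀ / 10 := by rw [dist_comm (a : X)]; exact add_lt_add h1 h2
          _ ≤ δ a₀ := by linarith
      have h5 : dist (a : X) (a₀ : X) < δ a₀ := hd
      have h6 := hδH a₀ a h5 t
      calc dist (Q a t) (Q a₀ t) ≤ dist (H (t, a)) (H (t, a₀)) := kEmb_dist_le _ _
        _ < ε a₀ := h6
    refine ⟨a₀, hballmem u a₀ ha₀T, fun t => ?_⟩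
    have hmem : Φ (u, t) ∈ closedBall (Q a₀ t) (ε a₀) ∩ Zs := by
      rw [hΦsum u t]
      refine ((convex_closedBall _ _).inter (convex_convexHull ℝ _)).sum_mem
        (fun a _ => pou.nonneg a u) (pou.sum_finsupport (mem_univ u)) (fun a ha => ⟨?_, ?_⟩)
      · exact mem_closedBall.2 (hdQ a ha t).le
      · exact subset_convexHull ℝ _ (mem_range_self _)
    exact ⟨hmem.2, mem_closedBall.1 hmem.1⟩
  choose a₀f ha₀ball ha₀Φ using KEY
  have hΦZ : ∀ (u : ↥U) (t : unitInterval), Φ (u, t) ∈ Zs := fun u t => (ha₀Φ u t).1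
  have hΦV : ∀ (u : ↥U) (t : unitInterval), (⟨Φ (u, t), hΦZ u t⟩ : Zs) ∈ V := by
    intro u t
    refine hρV (a₀f u) _ t ?_
    rw [Subtype.dist_eq]
    calc dist (Φ (u, t)) (e₀ (H (t, a₀f u))) ≤ ε (a₀f u) := (ha₀Φ u t).2
      _ < ρ (a₀f u) := half_lt_self (hρpos _)
  -- the inverse of the embedding composed with the retraction
  set pull : ↥V → K := fun v => Function.invFun e (r v) with hpulldef
  have hpullcont : Continuous pull := by
    rw [hce.toIsEmbedding.toIsInducing.continuous_iff]
    have heq : (e ∘ pull) = fun v => r v := funext fun v => Function.invFun_eq (hrmem v)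
    rw [heq]
    exact r.continuous
  have hpull_e : ∀ (k : K) (h : e k ∈ V), pull ⟨e k, h⟩ = k := by
    intro k h
    rw [hpulldef]
    simp only [hrfix k h]
    exact Function.leftInverse_invFun hemb.injective k
  have heyV : e y ∈ V := hVr (mem_range_self y)
  -- value of Φ at t = 1
  have hΦ1 : ∀ u : ↥U, Φ (u, 1) = e₀ y := by
    intro u
    have hQ1 : ∀ a : ↑A, Q a 1 = e₀ y := by
      intro a
      rw [hQdef]
      simp only [H.apply_one]
      rfl
    rw [hΦsum u 1]
    have : ∀ a ∈ pou.finsupport u, pou a u • Q a 1 = pou a u • e₀ y :=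
      fun a _ => by rw [hQ1]
    rw [Finset.sum_congr rfl this, ← Finset.sum_smul, pou.sum_finsupport (mem_univ u), one_smul]
  -- value of Q at 0
  have hQ0 : ∀ a : ↑A, Q a 0 = e₀ (f (a : X)) := by
    intro a
    rw [hQdef]
    simp only [H.apply_zero]
    rfl
  -- the straight-line part
  set σ : unitInterval × ↥U → W := fun p =>
    (1 - (p.1 : ℝ)) • e₀ (f (p.2 : X)) + (p.1 : ℝ) • Φ (p.2, 0) with hσdef
  have hσmem : ∀ p : unitInterval × ↥U,
      σ p ∈ closedBall (Q (a₀f p.2) 0) (ε (a₀f p.2)) ∩ Zs := by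
    rintro ⟨s, u⟩
    have h1 : e₀ (f (u : X)) ∈ closedBall (Q (a₀f u) 0) (ε (a₀f u)) ∩ Zs := by
      constructor
      · rw [mem_closedBall, hQ0]
        have hd : dist (u : X) ((a₀f u : ↑A) : X) < δ (a₀f u) := by
          have := ha₀ball u
          have := hδpos (a₀f u)
          linarith
        calc dist (e₀ (f (u : X))) (e₀ (f ((a₀f u : ↑A) : X))) ≤
              dist (f (u : X)) (f ((a₀f u : ↑A) : X)) := kEmb_dist_le _ _
          _ ≤ ε (a₀f u) := (hδf (a₀f u) (u : X) hd).le
      · exact subset_convexHull ℝ _ (mem_range_self _)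
    have h2 : Φ (u, 0) ∈ closedBall (Q (a₀f u) 0) (ε (a₀f u)) ∩ Zs :=
      ⟨mem_closedBall.2 (ha₀Φ u 0).2, (ha₀Φ u 0).1⟩
    exact ((convex_closedBall _ _).inter (convex_convexHull ℝ _)) h1 h2
      (by linarith [s.2.2]) s.2.1 (by ring)
  have hσZ : ∀ p, σ p ∈ Zs := fun p => (hσmem p).2
  have hσV : ∀ p : unitInterval × ↥U, (⟨σ p, hσZ p⟩ : Zs) ∈ V := by
    rintro ⟨s, u⟩
    refine hρV (a₀f u) _ 0 ?_
    rw [Subtype.dist_eq]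
    calc dist (σ (s, u)) (e₀ (H (0, a₀f u))) = dist (σ (s, u)) (Q (a₀f u) 0) := rfl
      _ ≤ ε (a₀f u) := mem_closedBall.1 (hσmem (s, u)).1
      _ < ρ (a₀f u) := half_lt_self (hρpos _)
  have hσcont : Continuous σ := by
    apply Continuous.add
    · exact ((continuous_const.sub (continuous_subtype_val.comp continuous_fst)).smul
        (he₀c.comp (f.continuous.comp (continuous_subtype_val.comp continuous_snd))))
    · exact ((continuous_subtype_val.comp continuous_fst).smul
        (hΦcont.comp ((continuous_snd).prodMk continuous_const)))
  -- the middle map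
  set G : C(↥U, K) :=
    ⟨fun u => pull ⟨⟨Φ (u, 0), hΦZ u 0⟩, hΦV u 0⟩, by
      apply hpullcont.comp
      apply Continuous.subtype_mk
      apply Continuous.subtype_mk
      exact hΦcont.comp (continuous_id.prodMk continuous_const)⟩ with hGdef
  -- first homotopy : f.restrict U ≃ G
  have hHom1 : (f.restrict U).Homotopic G := by
    refine ⟨⟨⟨fun p => pull ⟨⟨σ p, hσZ p⟩, hσV p⟩, ?_⟩, ?_, ?_⟩⟩
    · apply hpullcont.comp
      exact (hσcont.subtype_mk _).subtype_mk _
    · intro u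
      have hσ0 : σ (0, u) = e₀ (f (u : X)) := by
        simp only [hσdef]
        norm_num
      have hmemV : e (f (u : X)) ∈ V := by
        have h := hσV (0, u)
        have heq : (⟨σ (0, u), hσZ (0, u)⟩ : Zs) = e (f (u : X)) := Subtype.ext hσ0
        rwa [heq] at h
      have heq2 : (⟨⟨σ (0, u), hσZ (0, u)⟩, hσV (0, u)⟩ : ↥V) = ⟨e (f (u : X)), hmemV⟩ :=
        Subtype.ext (Subtype.ext hσ0)
      show pull ⟨⟨σ (0, u), hσZ (0, u)⟩, hσV (0, u)⟩ = (f.restrict U) u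
      rw [heq2, hpull_e]
      rfl
    · intro u
      have hσ1 : σ (1, u) = Φ (u, 0) := by
        simp only [hσdef]
        norm_num
      have heq2 : (⟨⟨σ (1, u), hσZ (1, u)⟩, hσV (1, u)⟩ : ↥V) =
          ⟨⟨Φ (u, 0), hΦZ u 0⟩, hΦV u 0⟩ :=
        Subtype.ext (Subtype.ext hσ1)
      show pull ⟨⟨σ (1, u), hσZ (1, u)⟩, hσV (1, u)⟩ = G u
      rw [heq2]
      rfl
  -- second homotopy : G ≃ const y
  have hHom2 : G.Homotopic (ContinuousMap.const ↥U y) := by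
    refine ⟨⟨⟨fun p => pull ⟨⟨Φ (p.2, p.1), hΦZ p.2 p.1⟩, hΦV p.2 p.1⟩, ?_⟩, ?_, ?_⟩⟩
    · apply hpullcont.comp
      apply Continuous.subtype_mk
      apply Continuous.subtype_mk
      exact hΦcont.comp (continuous_snd.prodMk continuous_fst)
    · intro u
      rfl
    · intro u
      have heq2 : (⟨⟨Φ (u, 1), hΦZ u 1⟩, hΦV u 1⟩ : ↥V) =
          ⟨e y, heyV⟩ := Subtype.ext (Subtype.ext (hΦ1 u))
      show pull ⟨⟨Φ (u, 1), hΦZ u 1⟩, hΦV u 1⟩ = ContinuousMap.const ↥U y u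
      rw [heq2, hpull_e]
      rfl
  exact ⟨y, hHom1.trans hHom2⟩
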